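/- arXiv:2301.05930 — 3 statements merged into one kernel-verified Lean document; each statement's English description precedes it below -/
import Mathlib

section
/- For every a > 0 and every function φ in H¹(0,∞), one has κ(a)·∫₀^{1/2} φ² dt ≤ ∫₀^∞ (φ')² dt + a²·∫_{1/2}^∞ φ² dt, where κ(a) is the smallest positive root of the equation √κ · tan(√κ/2) = a. -/
open MeasureTheory Set Filter

/-- product of two L² functions is integrable -/
lemma aux_mul_int {f g : ℝ → ℝ} {s : Set ℝ}
    (hf : AEStronglyMeasurable f (volume.restrict s))
    (hg : AEStronglyMeasurable g (volume.restrict s))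
    (hf2 : IntegrableOn (fun t => f t ^ 2) s)
    (hg2 : IntegrableOn (fun t => g t ^ 2) s) :
    IntegrableOn (fun t => f t * g t) s := by
  refine (hf2.add hg2).mono' (hf.mul hg) ?_
  filter_upwards with t
  have h : |f t * g t| ≤ f t ^ 2 + g t ^ 2 := by
    rw [abs_mul]
    nlinarith [sq_abs (f t), sq_abs (g t), sq_nonneg (|f t| - |g t|), abs_nonneg (f t),
      abs_nonneg (g t)]
  simpa [Real.norm_eq_abs, abs_mul] using h

set_option maxHeartbeats 1000000

lemma aux_tan_identity {x : ℝ} (h : Real.cos x ≠ 0) :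
    Real.tan x ^ 2 + 1 = 1 / Real.cos x ^ 2 := by
  rw [Real.tan_eq_sin_div_cos]
  field_simp
  exact Real.sin_sq_add_cos_sq x


/-- Friedrichs inequality on the half-line: for `a > 0` and `κ` the smallest positive root of
`√κ · tan(√κ/2) = a`, every `φ ∈ H¹(0,∞)` satisfies
`κ ∫₀^{1/2} φ² ≤ ∫₀^∞ (φ')² + a² ∫_{1/2}^∞ φ²`. -/
theorem friedrichs_half_line (a κ : ℝ) (ha : 0 < a)
    (hκpos : 0 < κ)
    (hκroot : Real.sqrt κ * Real.tan (Real.sqrt κ / 2) = a)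
    (hκmin : ∀ κ' : ℝ, 0 < κ' → Real.sqrt κ' * Real.tan (Real.sqrt κ' / 2) = a → κ ≤ κ')
    (φ φ' : ℝ → ℝ)
    (hφ : ∀ t, HasDerivAt φ (φ' t) t)
    (hφL2 : IntegrableOn (fun t => (φ t) ^ 2) (Ioi (0 : ℝ)))
    (hφ'L2 : IntegrableOn (fun t => (φ' t) ^ 2) (Ioi (0 : ℝ))) :
    κ * ∫ t in Ioo (0 : ℝ) (1 / 2), (φ t) ^ 2 ≤
      (∫ t in Ioi (0 : ℝ), (φ' t) ^ 2) + a ^ 2 * ∫ t in Ioi (1 / 2 : ℝ), (φ t) ^ 2 := by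
  have hπ := Real.pi_pos
  set μ := Real.sqrt κ with hμdef
  have hμpos : 0 < μ := Real.sqrt_pos.2 hκpos
  have hμsq : μ ^ 2 = κ := Real.sq_sqrt hκpos.le
  ------------------------------------------------------------------
  -- Step 1 : μ < π
  ------------------------------------------------------------------
  have hμlt : μ < Real.pi := by
    have htend : Tendsto (fun x : ℝ => x * Real.tan (x / 2))
        (nhdsWithin Real.pi (Iio Real.pi)) atTop := by
      apply Filter.Tendsto.pos_mul_atTop hπ
      · exact (Filter.tendsto_id (α := ℝ)).mono_right nhdsWithin_le_nhds
      · apply Real.tendsto_tan_pi_div_two.comp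
        apply tendsto_nhdsWithin_of_tendsto_nhds_of_eventually_within
        · exact ((continuous_id.div_const 2).tendsto Real.pi).mono_left nhdsWithin_le_nhds
        · filter_upwards [self_mem_nhdsWithin] with x hx
          simp only [mem_Iio] at hx ⊢
          linarith
    have h1 : ∀ᶠ x in nhdsWithin Real.pi (Iio Real.pi),
        a < x * Real.tan (x / 2) := htend.eventually_gt_atTop a
    have h2 : ∀ᶠ x in nhdsWithin Real.pi (Iio Real.pi), x ∈ Ioo (0 : ℝ) Real.pi :=
      Ioo_mem_nhdsLT_of_mem ⟨hπ, le_rfl⟩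
    obtain ⟨x, hx1, hx2⟩ := (h1.and h2).exists
    have hcont : ContinuousOn (fun y : ℝ => y * Real.tan (y / 2)) (Icc 0 x) := by
      intro y hy
      have hc : 0 < Real.cos (y / 2) :=
        Real.cos_pos_of_mem_Ioo ⟨by linarith [hy.1], by linarith [hy.2, hx2.2]⟩
      have h1 : ContinuousAt (fun z : ℝ => z / 2) y := continuousAt_id.div_const _
      have hct : ContinuousAt (fun z : ℝ => Real.tan (z / 2)) y :=
        ContinuousAt.comp (g := Real.tan) (f := fun z : ℝ => z / 2) (x := y)
          (Real.continuousAt_tan.2 hc.ne') h1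
      exact (continuousAt_id.mul hct).continuousWithinAt
    have hmem : a ∈ Icc ((fun y : ℝ => y * Real.tan (y / 2)) 0)
        ((fun y : ℝ => y * Real.tan (y / 2)) x) := by
      constructor
      · simp [ha.le]
      · exact hx1.le
    obtain ⟨y, hy, hfy⟩ := intermediate_value_Icc hx2.1.le hcont hmem
    have hy0 : 0 < y := by
      rcases hy.1.lt_or_eq with h | h
      · exact h
      · exfalso; rw [← h] at hfy; simp at hfy; linarith
    have hκle : κ ≤ y ^ 2 := by
      apply hκmin (y ^ 2) (pow_pos hy0 2)
      rw [Real.sqrt_sq hy0.le]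
      exact hfy
    have : μ ≤ y := by
      rw [hμdef]
      calc Real.sqrt κ ≤ Real.sqrt (y ^ 2) := Real.sqrt_le_sqrt hκle
        _ = y := Real.sqrt_sq hy0.le
    linarith [hy.2, hx2.2]
  ------------------------------------------------------------------
  -- basic positivity facts
  ------------------------------------------------------------------
  have hcosμt : ∀ t ∈ Icc (0 : ℝ) (1 / 2), 0 < Real.cos (μ * t) := by
    intro t ht
    apply Real.cos_pos_of_mem_Ioo
    constructor
    · nlinarith [ht.1, ht.2, hμpos]
    · nlinarith [ht.1, ht.2, hμpos]
  have htanμ2 : Real.tan (μ / 2) = a / μ := by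
    field_simp
    linarith [hκroot]
  -- bound : for t ∈ [0,1/2], 0 ≤ tan(μt) ≤ a/μ
  have htanb : ∀ t ∈ Icc (0 : ℝ) (1 / 2),
      0 ≤ Real.tan (μ * t) ∧ Real.tan (μ * t) ≤ a / μ := by
    intro t ht
    constructor
    · apply Real.tan_nonneg_of_nonneg_of_le_pi_div_two (by nlinarith [ht.1])
      nlinarith [ht.2]
    · rw [← htanμ2]
      rcases eq_or_lt_of_le (by nlinarith [ht.2] : μ * t ≤ μ / 2) with h | h
      · rw [h]
      · apply le_of_lt
        apply Real.strictMonoOn_tan ?_ ?_ h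
        · constructor <;> nlinarith [ht.1, ht.2]
        · constructor <;> nlinarith
  ------------------------------------------------------------------
  -- measurability / continuity facts
  ------------------------------------------------------------------
  have hφc : Continuous φ := by
    rw [continuous_iff_continuousAt]; exact fun t => (hφ t).continuousAt
  have hφ'eq : φ' = deriv φ := funext fun t => ((hφ t).deriv).symm
  have hφ'm : Measurable φ' := by rw [hφ'eq]; exact measurable_deriv φ
  have hφ'sm : ∀ s : Set ℝ, AEStronglyMeasurable φ' (volume.restrict s) :=
    fun s => (hφ'm.aestronglyMeasurable).restrict
  ------------------------------------------------------------------
  -- integrability facts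
  ------------------------------------------------------------------
  have hsub1 : Ioc (0 : ℝ) (1 / 2) ⊆ Ioi 0 := Ioc_subset_Ioi_self
  have hsub2 : Ioi (1 / 2 : ℝ) ⊆ Ioi 0 := Ioi_subset_Ioi (by norm_num)
  have hφ2Ioc : IntegrableOn (fun t => φ t ^ 2) (Ioc (0 : ℝ) (1 / 2)) := hφL2.mono_set hsub1
  have hφ'2Ioc : IntegrableOn (fun t => φ' t ^ 2) (Ioc (0 : ℝ) (1 / 2)) := hφ'L2.mono_set hsub1
  have hφ2Ioi : IntegrableOn (fun t => φ t ^ 2) (Ioi (1 / 2 : ℝ)) := hφL2.mono_set hsub2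
  have hφ'2Ioi : IntegrableOn (fun t => φ' t ^ 2) (Ioi (1 / 2 : ℝ)) := hφ'L2.mono_set hsub2
  have hcross : ∀ s : Set ℝ, IntegrableOn (fun t => φ t ^ 2) s →
      IntegrableOn (fun t => φ' t ^ 2) s →
      IntegrableOn (fun t => φ t * φ' t) s := fun s h1 h2 =>
    aux_mul_int (hφc.aestronglyMeasurable.restrict) (hφ'sm s) h1 h2
  have hcrossIoi : IntegrableOn (fun t => φ t * φ' t) (Ioi (1 / 2 : ℝ)) :=
    hcross _ hφ2Ioi hφ'2Ioi
  have hcrossIoc : IntegrableOn (fun t => φ t * φ' t) (Ioc (0 : ℝ) (1 / 2)) :=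
    hcross _ hφ2Ioc hφ'2Ioc
  ------------------------------------------------------------------
  -- the weight function g on [0, 1/2]
  ------------------------------------------------------------------
  set g : ℝ → ℝ := fun t => -μ * Real.tan (μ * t) with hgdef
  have hgb : ∀ t ∈ Icc (0 : ℝ) (1 / 2), |g t| ≤ a := by
    intro t ht
    obtain ⟨h1, h2⟩ := htanb t ht
    rw [hgdef]
    rw [abs_mul, abs_neg, abs_of_pos hμpos, abs_of_nonneg h1]
    calc μ * Real.tan (μ * t) ≤ μ * (a / μ) := by
          exact mul_le_mul_of_nonneg_left h2 hμpos.le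
      _ = a := by rw [mul_comm μ (a / μ), div_mul_cancel₀ a hμpos.ne']
  have hg12 : g (1 / 2) = -a := by
    rw [hgdef]
    simp only
    rw [show μ * (1 / 2) = μ / 2 by ring, htanμ2, neg_mul, mul_comm μ (a / μ),
      div_mul_cancel₀ a hμpos.ne']
  have hg0 : g 0 = 0 := by simp [hgdef]
  have hgderiv : ∀ t ∈ Icc (0 : ℝ) (1 / 2), HasDerivAt g (-κ - g t ^ 2) t := by
    intro t ht
    have hc := hcosμt t ht
    have h1 : HasDerivAt (fun s : ℝ => μ * s) μ t := by
      simpa using (hasDerivAt_id t).const_mul μ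
    have h2 : HasDerivAt (fun s : ℝ => Real.tan (μ * s)) (1 / Real.cos (μ * t) ^ 2 * μ) t :=
      (Real.hasDerivAt_tan hc.ne').comp t h1
    have h3 : HasDerivAt (fun y => -μ * Real.tan (μ * y)) (-μ * (1 / Real.cos (μ * t) ^ 2 * μ)) t :=
      h2.const_mul (-μ)
    convert h3 using 1
    have hid := aux_tan_identity hc.ne'
    rw [hgdef]
    simp only
    rw [← hid, ← hμsq]
    ring
  have hgcont : ContinuousOn g (Icc (0 : ℝ) (1 / 2)) :=
    fun t ht => ((hgderiv t ht).continuousAt).continuousWithinAt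
  ------------------------------------------------------------------
  -- Part 1 : κ ∫_{(0,1/2)} φ² ≤ ∫_{(0,1/2)} φ'² + a φ(1/2)²
  ------------------------------------------------------------------
  -- derivative of F = g φ²
  set F' : ℝ → ℝ := fun t => (-κ - g t ^ 2) * φ t ^ 2 + g t * (2 * φ t * φ' t) with hF'def
  have hFderiv : ∀ t ∈ uIcc (0 : ℝ) (1 / 2), HasDerivAt (fun s => g s * φ s ^ 2) (F' t) t := by
    intro t ht
    rw [uIcc_of_le (by norm_num)] at ht
    have h1 : HasDerivAt (fun s => φ s ^ 2) (2 * φ t * φ' t) t := by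
      have : HasDerivAt (fun s => φ s ^ 2) (((2 : ℕ) : ℝ) * φ t ^ (2 - 1) * φ' t) t :=
        (hφ t).fun_pow 2
      convert this using 1
      push_cast
      ring
    exact (hgderiv t ht).mul h1
  -- integrability of F' on Ioc 0 (1/2)
  have htanm : Measurable Real.tan := by
    have h : Real.tan = fun x => Real.sin x / Real.cos x := funext Real.tan_eq_sin_div_cos
    rw [h]
    exact Real.continuous_sin.measurable.div Real.continuous_cos.measurable
  have hgmeas : Measurable g := by
    rw [hgdef]
    exact measurable_const.mul (htanm.comp (measurable_id.const_mul μ))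
  have hF'meas : Measurable F' := by
    rw [hF'def]
    apply Measurable.add
    · exact (measurable_const.sub (hgmeas.pow_const 2)).mul (hφc.measurable.pow_const 2)
    · exact hgmeas.mul ((measurable_const.mul hφc.measurable).mul hφ'm)
  have hboundF' : ∀ t ∈ Ioc (0 : ℝ) (1 / 2),
      ‖F' t‖ ≤ (κ + a ^ 2) * φ t ^ 2 + a * |2 * φ t * φ' t| := by
    intro t ht
    have htI : t ∈ Icc (0 : ℝ) (1 / 2) := ⟨ht.1.le, ht.2⟩
    have hb := hgb t htI
    rw [hF'def, Real.norm_eq_abs]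
    have h1 : |(-κ - g t ^ 2) * φ t ^ 2| ≤ (κ + a ^ 2) * φ t ^ 2 := by
      rw [abs_mul, abs_of_nonneg (sq_nonneg (φ t))]
      apply mul_le_mul_of_nonneg_right _ (sq_nonneg _)
      rw [abs_sub_comm]
      have : |g t ^ 2 - -κ| = g t ^ 2 + κ := by
        rw [sub_neg_eq_add, abs_of_nonneg (by positivity)]
      rw [this]
      nlinarith [sq_abs (g t), abs_nonneg (g t), hb, ha.le]
    have h2 : |g t * (2 * φ t * φ' t)| ≤ a * |2 * φ t * φ' t| := by
      rw [abs_mul]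
      exact mul_le_mul_of_nonneg_right hb (abs_nonneg _)
    calc |(-κ - g t ^ 2) * φ t ^ 2 + g t * (2 * φ t * φ' t)|
        ≤ |(-κ - g t ^ 2) * φ t ^ 2| + |g t * (2 * φ t * φ' t)| := abs_add_le _ _
      _ ≤ (κ + a ^ 2) * φ t ^ 2 + a * |2 * φ t * φ' t| := add_le_add h1 h2
  have hcross2Ioc : IntegrableOn (fun t => 2 * φ t * φ' t) (Ioc (0 : ℝ) (1 / 2)) := by
    have h := hcrossIoc.const_mul 2
    exact (funext fun t => by ring :
      (fun t => 2 * (φ t * φ' t)) = fun t => 2 * φ t * φ' t) ▸ h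
  have hF'int : IntegrableOn F' (Ioc (0 : ℝ) (1 / 2)) := by
    have hgbdint : IntegrableOn
        (fun t => (κ + a ^ 2) * φ t ^ 2 + a * |2 * φ t * φ' t|) (Ioc (0 : ℝ) (1 / 2)) := by
      apply Integrable.add (hφ2Ioc.const_mul _)
      exact (hcross2Ioc.abs).const_mul a
    apply hgbdint.mono' (hF'meas.aestronglyMeasurable.restrict)
    rw [ae_restrict_iff' measurableSet_Ioc]
    filter_upwards with t ht
    exact hboundF' t ht
  have hF'II : IntervalIntegrable F' volume 0 (1 / 2) :=
    (intervalIntegrable_iff_integrableOn_Ioc_of_le (by norm_num)).2 hF'int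
  have hφ2II : IntervalIntegrable (fun t => φ t ^ 2) volume 0 (1 / 2) :=
    (intervalIntegrable_iff_integrableOn_Ioc_of_le (by norm_num)).2 hφ2Ioc
  have hφ'2II : IntervalIntegrable (fun t => φ' t ^ 2) volume 0 (1 / 2) :=
    (intervalIntegrable_iff_integrableOn_Ioc_of_le (by norm_num)).2 hφ'2Ioc
  have hFTC1 : ∫ t in (0 : ℝ)..(1 / 2), F' t = -(a * φ (1 / 2) ^ 2) := by
    rw [intervalIntegral.integral_eq_sub_of_hasDerivAt hFderiv hF'II]
    rw [hg12, hg0]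
    ring
  -- pointwise : φ'² - κ φ² - F' = (φ' - g φ)² ≥ 0
  have hptwise : ∀ t, φ' t ^ 2 - κ * φ t ^ 2 - F' t = (φ' t - g t * φ t) ^ 2 := by
    intro t
    rw [hF'def]
    ring
  have hint1 : 0 ≤ ∫ t in (0 : ℝ)..(1 / 2), (φ' t ^ 2 - κ * φ t ^ 2 - F' t) := by
    apply intervalIntegral.integral_nonneg (by norm_num)
    intro u _
    rw [hptwise u]
    positivity
  have hsplit1 : ∫ t in (0 : ℝ)..(1 / 2), (φ' t ^ 2 - κ * φ t ^ 2 - F' t) =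
      (∫ t in (0 : ℝ)..(1 / 2), φ' t ^ 2) - κ * (∫ t in (0 : ℝ)..(1 / 2), φ t ^ 2)
        - ∫ t in (0 : ℝ)..(1 / 2), F' t := by
    rw [intervalIntegral.integral_sub (hφ'2II.sub (hφ2II.const_mul κ)) hF'II,
      intervalIntegral.integral_sub hφ'2II (hφ2II.const_mul κ),
      intervalIntegral.integral_const_mul]
  have hpart1 : κ * (∫ t in (0 : ℝ)..(1 / 2), φ t ^ 2) ≤
      (∫ t in (0 : ℝ)..(1 / 2), φ' t ^ 2) + a * φ (1 / 2) ^ 2 := by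
    rw [hsplit1, hFTC1] at hint1
    linarith
  ------------------------------------------------------------------
  -- Part 2 prep : FTC for φ² on [1/2, T] and limit of φ(T)²
  ------------------------------------------------------------------
  have hcross2Ioi : IntegrableOn (fun t => 2 * φ t * φ' t) (Ioi (1 / 2 : ℝ)) := by
    have h := hcrossIoi.const_mul 2
    exact (funext fun t => by ring :
      (fun t => 2 * (φ t * φ' t)) = fun t => 2 * φ t * φ' t) ▸ h
  have hII2 : ∀ T, 1 / 2 ≤ T → IntervalIntegrable (fun t => 2 * φ t * φ' t) volume (1 / 2) T := by
    intro T hT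
    exact (intervalIntegrable_iff_integrableOn_Ioc_of_le hT).2
      (hcross2Ioi.mono_set Ioc_subset_Ioi_self)
  have hFTC2 : ∀ T, 1 / 2 ≤ T →
      ∫ t in (1 / 2 : ℝ)..T, (2 * φ t * φ' t) = φ T ^ 2 - φ (1 / 2) ^ 2 := by
    intro T hT
    apply intervalIntegral.integral_eq_sub_of_hasDerivAt
    · intro x _
      have : HasDerivAt (fun s => φ s ^ 2) (((2 : ℕ) : ℝ) * φ x ^ (2 - 1) * φ' x) x :=
        (hφ x).fun_pow 2
      exact this.congr_deriv (by push_cast; ring)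
    · exact hII2 T hT
  have hlimI : Tendsto (fun T => ∫ t in (1 / 2 : ℝ)..T, (2 * φ t * φ' t)) atTop
      (nhds (∫ t in Ioi (1 / 2 : ℝ), (2 * φ t * φ' t))) :=
    intervalIntegral_tendsto_integral_Ioi _ hcross2Ioi tendsto_id
  set L : ℝ := φ (1 / 2) ^ 2 + ∫ t in Ioi (1 / 2 : ℝ), (2 * φ t * φ' t) with hLdef
  have hlimφ : Tendsto (fun T => φ T ^ 2) atTop (nhds L) := by
    have h : ∀ᶠ T in atTop, φ (1 / 2) ^ 2 + (∫ t in (1 / 2 : ℝ)..T, (2 * φ t * φ' t))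
        = φ T ^ 2 := by
      filter_upwards [eventually_ge_atTop (1 / 2 : ℝ)] with T hT
      rw [hFTC2 T hT]; ring
    exact Tendsto.congr' h ((tendsto_const_nhds).add hlimI)
  -- L = 0
  have hL0 : L = 0 := by
    by_contra hne
    have hLnn : 0 ≤ L := ge_of_tendsto hlimφ (Eventually.of_forall fun T => sq_nonneg _)
    have hLpos : 0 < L := hLnn.lt_of_ne (Ne.symm hne)
    have hev : ∀ᶠ T in atTop, L / 2 < φ T ^ 2 :=
      hlimφ.eventually (eventually_gt_nhds (half_lt_self hLpos))
    obtain ⟨M, hM⟩ := (hev.and (eventually_ge_atTop (1 / 2 : ℝ))).exists_forall_of_atTop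
    have hMhalf : (1 / 2 : ℝ) ≤ M := (hM M le_rfl).2
    have hφ2IoiM : IntegrableOn (fun t => φ t ^ 2) (Ioi M) :=
      hφ2Ioi.mono_set (Ioi_subset_Ioi hMhalf)
    set C := ∫ t in Ioi M, φ t ^ 2 with hCdef
    set T := M + 2 * (C + 1) / L with hTdef
    have hTM : M ≤ T := by
      rw [hTdef]
      have h1 : 0 ≤ C := setIntegral_nonneg measurableSet_Ioi fun t _ => sq_nonneg _
      have : 0 ≤ 2 * (C + 1) / L := by positivity
      linarith
    have hlow : (T - M) * (L / 2) ≤ ∫ t in M..T, φ t ^ 2 := by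
      have hconst : ∫ t in M..T, (L / 2 : ℝ) = (T - M) * (L / 2) := by
        rw [intervalIntegral.integral_const]; simp [smul_eq_mul]
      rw [← hconst]
      apply intervalIntegral.integral_mono_on hTM
        (intervalIntegrable_const)
        ((intervalIntegrable_iff_integrableOn_Ioc_of_le hTM).2
          (hφ2IoiM.mono_set Ioc_subset_Ioi_self))
      intro x hx
      exact (hM x (hx.1)).1.le
    have hup : ∫ t in M..T, φ t ^ 2 ≤ C := by
      rw [intervalIntegral.integral_of_le hTM, hCdef]
      apply setIntegral_mono_set hφ2IoiM
      · filter_upwards with t using sq_nonneg _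
      · exact HasSubset.Subset.eventuallyLE Ioc_subset_Ioi_self
    have : (T - M) * (L / 2) = C + 1 := by
      have hL' : L ≠ 0 := hLpos.ne'
      rw [hTdef]
      field_simp
      ring
    linarith
  have hlimφ0 : Tendsto (fun T => φ T ^ 2) atTop (nhds 0) := hL0 ▸ hlimφ
  ------------------------------------------------------------------
  -- Part 2 : a φ(1/2)² ≤ ∫_{Ioi 1/2} φ'² + a² ∫_{Ioi 1/2} φ²
  ------------------------------------------------------------------
  have hpart2 : a * φ (1 / 2) ^ 2 ≤
      (∫ t in Ioi (1 / 2 : ℝ), φ' t ^ 2) + a ^ 2 * ∫ t in Ioi (1 / 2 : ℝ), φ t ^ 2 := by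
    have hkey : ∀ T, 1 / 2 ≤ T →
        a * φ (1 / 2) ^ 2 - a * φ T ^ 2 ≤
          (∫ t in (1 / 2 : ℝ)..T, φ' t ^ 2) + a ^ 2 * ∫ t in (1 / 2 : ℝ)..T, φ t ^ 2 := by
      intro T hT
      have hφ'2IIT : IntervalIntegrable (fun t => φ' t ^ 2) volume (1 / 2) T :=
        (intervalIntegrable_iff_integrableOn_Ioc_of_le hT).2
          (hφ'2Ioi.mono_set Ioc_subset_Ioi_self)
      have hφ2IIT : IntervalIntegrable (fun t => φ t ^ 2) volume (1 / 2) T :=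
        (intervalIntegrable_iff_integrableOn_Ioc_of_le hT).2
          (hφ2Ioi.mono_set Ioc_subset_Ioi_self)
      have hnn : 0 ≤ ∫ t in (1 / 2 : ℝ)..T,
          (φ' t ^ 2 + a ^ 2 * φ t ^ 2 + a * (2 * φ t * φ' t)) := by
        apply intervalIntegral.integral_nonneg hT
        intro u _
        have : φ' u ^ 2 + a ^ 2 * φ u ^ 2 + a * (2 * φ u * φ' u) = (φ' u + a * φ u) ^ 2 := by
          ring
        rw [this]; positivity
      have hsplit : ∫ t in (1 / 2 : ℝ)..T,
          (φ' t ^ 2 + a ^ 2 * φ t ^ 2 + a * (2 * φ t * φ' t)) =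
          (∫ t in (1 / 2 : ℝ)..T, φ' t ^ 2) + a ^ 2 * (∫ t in (1 / 2 : ℝ)..T, φ t ^ 2)
            + a * ∫ t in (1 / 2 : ℝ)..T, (2 * φ t * φ' t) := by
        rw [intervalIntegral.integral_add (hφ'2IIT.add (hφ2IIT.const_mul (a ^ 2)))
            ((hII2 T hT).const_mul a),
          intervalIntegral.integral_add hφ'2IIT (hφ2IIT.const_mul (a ^ 2)),
          intervalIntegral.integral_const_mul, intervalIntegral.integral_const_mul]
      rw [hsplit, hFTC2 T hT] at hnn
      nlinarith [hnn]
    have hlhs : Tendsto (fun T => a * φ (1 / 2) ^ 2 - a * φ T ^ 2) atTop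
        (nhds (a * φ (1 / 2) ^ 2)) := by
      have := (hlimφ0.const_mul a)
      have h2 := (tendsto_const_nhds (x := a * φ (1 / 2) ^ 2) (f := atTop (α := ℝ))).sub this
      simpa using h2
    have hrhs : Tendsto (fun T => (∫ t in (1 / 2 : ℝ)..T, φ' t ^ 2)
        + a ^ 2 * ∫ t in (1 / 2 : ℝ)..T, φ t ^ 2) atTop
        (nhds ((∫ t in Ioi (1 / 2 : ℝ), φ' t ^ 2)
          + a ^ 2 * ∫ t in Ioi (1 / 2 : ℝ), φ t ^ 2)) :=
      (intervalIntegral_tendsto_integral_Ioi _ hφ'2Ioi tendsto_id).add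
        ((intervalIntegral_tendsto_integral_Ioi _ hφ2Ioi tendsto_id).const_mul (a ^ 2))
    exact le_of_tendsto_of_tendsto hlhs hrhs
      ((eventually_ge_atTop (1 / 2 : ℝ)).mono fun T hT => hkey T hT)
  ------------------------------------------------------------------
  -- Combine
  ------------------------------------------------------------------
  have hIoo : ∫ t in Ioo (0 : ℝ) (1 / 2), φ t ^ 2 = ∫ t in (0 : ℝ)..(1 / 2), φ t ^ 2 := by
    rw [intervalIntegral.integral_of_le (by norm_num), integral_Ioc_eq_integral_Ioo]
  have hsplitIoi : ∫ t in Ioi (0 : ℝ), φ' t ^ 2 =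
      (∫ t in Ioc (0 : ℝ) (1 / 2), φ' t ^ 2) + ∫ t in Ioi (1 / 2 : ℝ), φ' t ^ 2 := by
    rw [← setIntegral_union (Ioc_disjoint_Ioi le_rfl) measurableSet_Ioi hφ'2Ioc hφ'2Ioi,
      Ioc_union_Ioi_eq_Ioi (by norm_num : (0 : ℝ) ≤ 1 / 2)]
  have hIoc : ∫ t in (0 : ℝ)..(1 / 2), φ' t ^ 2 = ∫ t in Ioc (0 : ℝ) (1 / 2), φ' t ^ 2 :=
    intervalIntegral.integral_of_le (by norm_num)
  rw [hIoo, hsplitIoi]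
  rw [hIoc] at hpart1
  linarith
end

section
/- For every a > 0, R > 1/2, and φ ∈ H¹(0,R), one has κ(a,R)·∫₀^{1/2} φ² dt ≤ ∫₀^R (φ')² dt + a²·∫_{1/2}^R φ² dt, where κ(a,R) is the smallest positive root of √κ · tan(√κ/2) = a·tanh(a(R − 1/2)). -/
open MeasureTheory Set
open scoped Real

lemma hasDerivAt_tanh' (x : ℝ) :
    HasDerivAt Real.tanh (1 - Real.tanh x ^ 2) x := by
  have hc : Real.cosh x ≠ 0 := (Real.cosh_pos x).ne'
  have h : HasDerivAt (fun y => Real.sinh y / Real.cosh y)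
      ((Real.cosh x * Real.cosh x - Real.sinh x * Real.sinh x) / Real.cosh x ^ 2) x :=
    (Real.hasDerivAt_sinh x).div (Real.hasDerivAt_cosh x) hc
  have heq : (fun y => Real.sinh y / Real.cosh y) = Real.tanh := by
    funext y; rw [Real.tanh_eq_sinh_div_cosh]
  rw [heq] at h
  convert h using 1
  rw [Real.tanh_eq_sinh_div_cosh]
  field_simp

set_option maxHeartbeats 2000000 in
/-- Friedrichs inequality on the truncated interval `(0,R)`: for `a > 0`, `R > 1/2` and
`κ(a,R)` the smallest positive root of `√κ · tan(√κ/2) = a·tanh(a(R − 1/2))`, every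
`φ ∈ H¹(0,R)` satisfies `κ(a,R) ∫₀^{1/2} φ² ≤ ∫₀^R (φ')² + a² ∫_{1/2}^R φ²`. -/
theorem friedrichs_truncated (a R κ : ℝ) (ha : 0 < a) (hR : 1 / 2 < R)
    (hκpos : 0 < κ)
    (hκroot : Real.sqrt κ * Real.tan (Real.sqrt κ / 2) = a * Real.tanh (a * (R - 1 / 2)))
    (hκmin : ∀ κ' : ℝ, 0 < κ' →
      Real.sqrt κ' * Real.tan (Real.sqrt κ' / 2) = a * Real.tanh (a * (R - 1 / 2)) → κ ≤ κ')
    (φ φ' : ℝ → ℝ)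
    (hφ : ∀ t, HasDerivAt φ (φ' t) t)
    (hφL2 : IntegrableOn (fun t => (φ t) ^ 2) (Ioo (0 : ℝ) R))
    (hφ'L2 : IntegrableOn (fun t => (φ' t) ^ 2) (Ioo (0 : ℝ) R)) :
    κ * ∫ t in Ioo (0 : ℝ) (1 / 2), (φ t) ^ 2 ≤
      (∫ t in Ioo (0 : ℝ) R, (φ' t) ^ 2) + a ^ 2 * ∫ t in Ioo (1 / 2 : ℝ) R, (φ t) ^ 2 := by
  set c : ℝ := a * Real.tanh (a * (R - 1 / 2)) with hc_def
  have hc : 0 < c := by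
    apply mul_pos ha
    rw [Real.tanh_eq_sinh_div_cosh]
    exact div_pos (Real.sinh_pos_iff.mpr (by nlinarith)) (Real.cosh_pos _)
  set s := Real.sqrt κ with hs_def
  have hs0 : 0 < s := Real.sqrt_pos.mpr hκpos
  have hsq : s ^ 2 = κ := Real.sq_sqrt hκpos.le
  -- bound s below π
  set x := Real.arctan (c + 1) with hx_def
  have hx2 : x < π / 2 := Real.arctan_lt_pi_div_two _
  have hx1 : π / 4 < x := by
    rw [hx_def, ← Real.arctan_one]
    exact Real.arctan_strictMono (by linarith)
  have hπ : (3:ℝ) < π := Real.pi_gt_three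
  have hcont : ContinuousOn (fun z => z * Real.tan (z / 2)) (Icc 0 (2 * x)) := by
    intro z hz
    have hzc : Real.cos (z / 2) ≠ 0 := by
      apply (Real.cos_pos_of_mem_Ioo ⟨by nlinarith [hz.1], by nlinarith [hz.2]⟩).ne'
    have htan : ContinuousAt (fun y : ℝ => Real.tan (y / 2)) z :=
      ContinuousAt.comp (g := Real.tan) (f := fun y : ℝ => y / 2)
        (Real.continuousAt_tan.mpr hzc) (continuousAt_id.div_const 2)
    exact (continuousAt_id.mul htan).continuousWithinAt
  have hmem : c ∈ Icc ((fun z => z * Real.tan (z / 2)) 0) ((fun z => z * Real.tan (z / 2)) (2 * x)) := by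
    constructor
    · simp [hc.le]
    · have htx : Real.tan (2 * x / 2) = c + 1 := by
        rw [show (2:ℝ) * x / 2 = x by ring, hx_def, Real.tan_arctan]
      simp only
      rw [htx]
      nlinarith
  obtain ⟨s₀, hs₀mem, hs₀⟩ := intermediate_value_Icc (by nlinarith) hcont hmem
  have hs₀pos : 0 < s₀ := by
    rcases hs₀mem.1.lt_or_eq with h | h
    · exact h
    · exfalso; rw [← h] at hs₀; simp at hs₀; linarith
  have hκle : κ ≤ s₀ ^ 2 := by
    apply hκmin _ (by positivity)
    rw [Real.sqrt_sq hs₀pos.le]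
    exact hs₀
  have hs_lt : s < π := by
    have h1 : s ≤ s₀ := by
      rw [hs_def, ← Real.sqrt_sq hs₀pos.le]; exact Real.sqrt_le_sqrt hκle
    have h2 : s₀ ≤ 2 * x := hs₀mem.2
    linarith
  -- cos positivity on [0, 1/2]
  have hcos : ∀ t ∈ Icc (0:ℝ) (1/2), 0 < Real.cos (s * t) := by
    intro t ht
    apply Real.cos_pos_of_mem_Ioo
    constructor
    · nlinarith [Real.pi_pos, ht.1, hs0]
    · nlinarith [ht.2, hs0, hs_lt, ht.1]
  set u : ℝ → ℝ := fun t => s * Real.tan (s * t) with hu_def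
  have hu : ∀ t ∈ Icc (0:ℝ) (1/2), HasDerivAt u (κ + u t ^ 2) t := by
    intro t ht
    have hct := (hcos t ht).ne'
    have h1 : HasDerivAt (fun y : ℝ => s * y) s t := by
      simpa using (hasDerivAt_id t).const_mul s
    have h2 := ((Real.hasDerivAt_tan hct).comp t h1).const_mul s
    refine h2.congr_deriv ?_
    have hc2 : Real.cos (s * t) ^ 2 ≠ 0 := pow_ne_zero _ hct
    simp only [hu_def, Real.tan_eq_sin_div_cos]
    field_simp
    nlinarith [Real.sin_sq_add_cos_sq (s * t), hsq]
  set v : ℝ → ℝ := fun t => a * Real.tanh (a * (R - t)) with hv_def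
  have hv : ∀ t : ℝ, HasDerivAt v (v t ^ 2 - a ^ 2) t := by
    intro t
    have h1 : HasDerivAt (fun y : ℝ => a * (R - y)) (-a) t := by
      simpa using ((hasDerivAt_id t).const_sub R).const_mul a
    have h2 := ((hasDerivAt_tanh' (a * (R - t))).comp t h1).const_mul a
    refine h2.congr_deriv ?_
    simp only [hv_def]
    ring
  -- measurability and integrability
  have hφcont : Continuous φ := continuous_iff_continuousAt.mpr fun t => (hφ t).continuousAt
  have hφ'meas : AEStronglyMeasurable φ' (volume.restrict (Ioo (0:ℝ) R)) := by
    have hφ'eq : φ' = deriv φ := funext fun t => ((hφ t).deriv).symm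
    rw [hφ'eq]
    exact (measurable_deriv φ).aestronglyMeasurable
  have hφφ' : IntegrableOn (fun t => φ t * φ' t) (Ioo (0:ℝ) R) := by
    have hg : IntegrableOn (fun t => (φ t ^ 2 + φ' t ^ 2) / 2) (Ioo (0:ℝ) R) :=
      (hφL2.add hφ'L2).div_const 2
    refine Integrable.mono' hg (hφcont.aestronglyMeasurable.mul hφ'meas) ?_
    filter_upwards with t
    rw [Real.norm_eq_abs, abs_mul]
    nlinarith [sq_nonneg (|φ t| - |φ' t|), sq_abs (φ t), sq_abs (φ' t),
      abs_nonneg (φ t), abs_nonneg (φ' t)]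
  have hRpos : (0:ℝ) < R := by linarith
  have incl1 : Ioc (0:ℝ) (1/2) ⊆ Ioo (0:ℝ) R := fun t ht => ⟨ht.1, lt_of_le_of_lt ht.2 hR⟩
  have incl2 : Ioo (1/2:ℝ) R ⊆ Ioo (0:ℝ) R := fun t ht => ⟨by linarith [ht.1], ht.2⟩
  have mk1 : ∀ {f : ℝ → ℝ}, IntegrableOn f (Ioo (0:ℝ) R) → IntervalIntegrable f volume 0 (1/2) := by
    intro f hf
    rw [intervalIntegrable_iff_integrableOn_Ioc_of_le (by norm_num)]
    exact hf.mono_set incl1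
  have mk2 : ∀ {f : ℝ → ℝ}, IntegrableOn f (Ioo (0:ℝ) R) → IntervalIntegrable f volume (1/2) R := by
    intro f hf
    rw [intervalIntegrable_iff_integrableOn_Ioc_of_le hR.le, integrableOn_Ioc_iff_integrableOn_Ioo]
    exact hf.mono_set incl2
  have huIcc : uIcc (0:ℝ) (1/2) = Icc (0:ℝ) (1/2) := uIcc_of_le (by norm_num)
  have hucont : ContinuousOn u (uIcc (0:ℝ) (1/2)) := by
    rw [huIcc]; intro t ht; exact ((hu t ht).continuousAt).continuousWithinAt
  have hvcont : Continuous v := continuous_iff_continuousAt.mpr fun t => (hv t).continuousAt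
  -- FTC on [0, 1/2]
  have hD1int : IntervalIntegrable
      (fun t => (κ + u t ^ 2) * φ t ^ 2 + u t * (2 * (φ t * φ' t))) volume 0 (1/2) := by
    apply IntervalIntegrable.add
    · exact IntervalIntegrable.continuousOn_mul (mk1 hφL2) (continuousOn_const.add (hucont.pow 2))
    · exact IntervalIntegrable.continuousOn_mul ((mk1 hφφ').const_mul 2) hucont
  have key1 : (∫ t in (0:ℝ)..(1/2), ((κ + u t ^ 2) * φ t ^ 2 + u t * (2 * (φ t * φ' t))))
      = c * φ (1/2) ^ 2 := by
    have hderiv : ∀ t ∈ uIcc (0:ℝ) (1/2), HasDerivAt (fun t => u t * φ t ^ 2)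
        ((κ + u t ^ 2) * φ t ^ 2 + u t * (2 * (φ t * φ' t))) t := by
      intro t ht
      rw [huIcc] at ht
      have h3 := (hu t ht).mul ((hφ t).pow 2)
      refine h3.congr_deriv ?_
      simp only [Nat.cast_ofNat, pow_one, Pi.pow_apply]
      ring
    rw [intervalIntegral.integral_eq_sub_of_hasDerivAt hderiv hD1int]
    have hu0 : u 0 = 0 := by simp [hu_def]
    have hu12 : u (1/2) = c := by
      simp only [hu_def]
      rw [show s * (1/2) = s / 2 by ring]
      exact hκroot
    rw [hu0, hu12]
    ring
  -- FTC on [1/2, R]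
  have hD2int : IntervalIntegrable
      (fun t => (v t ^ 2 - a ^ 2) * φ t ^ 2 + v t * (2 * (φ t * φ' t))) volume (1/2) R := by
    apply IntervalIntegrable.add
    · exact IntervalIntegrable.continuousOn_mul (mk2 hφL2)
        (((hvcont.pow 2).sub continuous_const).continuousOn)
    · exact IntervalIntegrable.continuousOn_mul ((mk2 hφφ').const_mul 2) hvcont.continuousOn
  have key2 : (∫ t in (1/2:ℝ)..R, ((v t ^ 2 - a ^ 2) * φ t ^ 2 + v t * (2 * (φ t * φ' t))))
      = -(c * φ (1/2) ^ 2) := by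
    have hderiv : ∀ t ∈ uIcc (1/2:ℝ) R, HasDerivAt (fun t => v t * φ t ^ 2)
        ((v t ^ 2 - a ^ 2) * φ t ^ 2 + v t * (2 * (φ t * φ' t))) t := by
      intro t _
      have h3 := (hv t).mul ((hφ t).pow 2)
      refine h3.congr_deriv ?_
      simp only [Nat.cast_ofNat, pow_one, Pi.pow_apply]
      ring
    rw [intervalIntegral.integral_eq_sub_of_hasDerivAt hderiv hD2int]
    have hvR : v R = 0 := by simp [hv_def]
    have hv12 : v (1/2) = c := by simp only [hv_def, hc_def]
    rw [hvR, hv12]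
    ring
  -- inequality A on [0, 1/2]
  have hA : κ * (∫ t in (0:ℝ)..(1/2), φ t ^ 2)
      ≤ (∫ t in (0:ℝ)..(1/2), φ' t ^ 2) + c * φ (1/2) ^ 2 := by
    have hnn : 0 ≤ ∫ t in (0:ℝ)..(1/2), (φ' t + u t * φ t) ^ 2 :=
      intervalIntegral.integral_nonneg (by norm_num) (fun t _ => sq_nonneg _)
    have hId : (∫ t in (0:ℝ)..(1/2), (φ' t + u t * φ t) ^ 2)
        = ((∫ t in (0:ℝ)..(1/2), φ' t ^ 2)
          + ∫ t in (0:ℝ)..(1/2), ((κ + u t ^ 2) * φ t ^ 2 + u t * (2 * (φ t * φ' t))))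
          - κ * ∫ t in (0:ℝ)..(1/2), φ t ^ 2 := by
      rw [← intervalIntegral.integral_const_mul,
        ← intervalIntegral.integral_add (mk1 hφ'L2) hD1int,
        ← intervalIntegral.integral_sub ((mk1 hφ'L2).add hD1int) ((mk1 hφL2).const_mul κ)]
      apply intervalIntegral.integral_congr
      intro t _
      simp only
      ring
    rw [hId, key1] at hnn
    linarith
  -- inequality B on [1/2, R]
  have hB : c * φ (1/2) ^ 2
      ≤ (∫ t in (1/2:ℝ)..R, φ' t ^ 2) + a ^ 2 * ∫ t in (1/2:ℝ)..R, φ t ^ 2 := by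
    have hnn : 0 ≤ ∫ t in (1/2:ℝ)..R, (φ' t + v t * φ t) ^ 2 :=
      intervalIntegral.integral_nonneg hR.le (fun t _ => sq_nonneg _)
    have hId : (∫ t in (1/2:ℝ)..R, (φ' t + v t * φ t) ^ 2)
        = ((∫ t in (1/2:ℝ)..R, φ' t ^ 2)
          + ∫ t in (1/2:ℝ)..R, ((v t ^ 2 - a ^ 2) * φ t ^ 2 + v t * (2 * (φ t * φ' t))))
          + a ^ 2 * ∫ t in (1/2:ℝ)..R, φ t ^ 2 := by
      rw [← intervalIntegral.integral_const_mul,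
        ← intervalIntegral.integral_add (mk2 hφ'L2) hD2int,
        ← intervalIntegral.integral_add ((mk2 hφ'L2).add hD2int) ((mk2 hφL2).const_mul (a ^ 2))]
      apply intervalIntegral.integral_congr
      intro t _
      simp only
      ring
    rw [hId, key2] at hnn
    linarith
  -- conversions between set integrals and interval integrals
  have e1 : (∫ t in Ioo (0:ℝ) (1/2), φ t ^ 2) = ∫ t in (0:ℝ)..(1/2), φ t ^ 2 := by
    rw [intervalIntegral.integral_of_le (by norm_num : (0:ℝ) ≤ 1/2), integral_Ioc_eq_integral_Ioo]
  have e2 : (∫ t in Ioo (1/2:ℝ) R, φ t ^ 2) = ∫ t in (1/2:ℝ)..R, φ t ^ 2 := by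
    rw [intervalIntegral.integral_of_le hR.le, integral_Ioc_eq_integral_Ioo]
  have e3 : (∫ t in Ioo (0:ℝ) R, φ' t ^ 2)
      = (∫ t in (0:ℝ)..(1/2), φ' t ^ 2) + ∫ t in (1/2:ℝ)..R, φ' t ^ 2 := by
    rw [intervalIntegral.integral_add_adjacent_intervals (mk1 hφ'L2) (mk2 hφ'L2),
      intervalIntegral.integral_of_le hRpos.le, integral_Ioc_eq_integral_Ioo]
  rw [e1, e2, e3]
  linarith
end

section
/- Let φ ∈ H¹(Ω₁⁺) where Ω₁⁺ is the half-junction domain, and suppose the Friedrichs-type bounds (a) 2π²∫_{L₁⁺}φ² ≤ ∫_{L₁⁺}|∇φ|², (b) π²∫_{Q₁⁺}φ² ≤ ∫_{Q₁⁺}(∂₁φ)², (c) (π²/2)∫_{Q₁⁺}φ² ≤ ∫_{S₂}(∂₂φ)² + (5π²/2)∫_{S₂⁺∪S₂⁻}φ², (d) the analogous bound with indices 2 and 3 swapped, and (e) 5π²∫_{S₂^±}φ² ≤ ∫_{S₂^±}((∂₁φ)² + (∂₃φ)²) and 5π²∫_{S₃^±}φ² ≤ ∫_{S₃^±}((∂₁φ)²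 + (∂₂φ)²) all hold. Then 2π²∫_{Ω₁⁺}φ² ≤ ∫_{Ω₁⁺}|∇φ|². -/
open MeasureTheory Set Real

/-- The plane `x₁ = c` is a null set in `ℝ × ℝ × ℝ`. -/
lemma plane1_null (c : ℝ) : (volume : Measure (ℝ × ℝ × ℝ)) {x | x.1 = c} = 0 := by
  have h : {x : ℝ × ℝ × ℝ | x.1 = c} = ({c} : Set ℝ) ×ˢ (univ : Set (ℝ × ℝ)) := by
    ext x
    simp only [Set.mem_setOf_eq, Set.mem_prod, Set.mem_singleton_iff, Set.mem_univ, and_true]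
  rw [h, Measure.volume_eq_prod, Measure.prod_prod]
  simp

/-- The plane `x₂ = c` is a null set in `ℝ × ℝ × ℝ`. -/
lemma plane2_null (c : ℝ) : (volume : Measure (ℝ × ℝ × ℝ)) {x | x.2.1 = c} = 0 := by
  have h : {x : ℝ × ℝ × ℝ | x.2.1 = c} =
      (univ : Set ℝ) ×ˢ (({c} : Set ℝ) ×ˢ (univ : Set ℝ)) := by
    ext x
    simp only [Set.mem_setOf_eq, Set.mem_prod, Set.mem_singleton_iff, Set.mem_univ,
      and_true, true_and]
  rw [h, Measure.volume_eq_prod, Measure.prod_prod, Measure.volume_eq_prod,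
    Measure.prod_prod]
  simp

/-- The plane `x₃ = c` is a null set in `ℝ × ℝ × ℝ`. -/
lemma plane3_null (c : ℝ) : (volume : Measure (ℝ × ℝ × ℝ)) {x | x.2.2 = c} = 0 := by
  have h : {x : ℝ × ℝ × ℝ | x.2.2 = c} =
      (univ : Set ℝ) ×ˢ ((univ : Set ℝ) ×ˢ ({c} : Set ℝ)) := by
    ext x
    simp only [Set.mem_setOf_eq, Set.mem_prod, Set.mem_singleton_iff, Set.mem_univ,
      and_true, true_and]
  rw [h, Measure.volume_eq_prod, Measure.prod_prod, Measure.volume_eq_prod,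
    Measure.prod_prod]
  simp

set_option maxHeartbeats 2000000 in
/-- Summation of Friedrichs-type bounds on the pieces of the half-junction `Ω₁⁺` of the 3D
cross of three orthogonal unit-square cylinders yields the global bound
`2π² ∫_{Ω₁⁺} φ² ≤ ∫_{Ω₁⁺} |∇φ|²`. -/
theorem half_junction_friedrichs
    (φ d1 d2 d3 : ℝ × ℝ × ℝ → ℝ)
    (hd1 : ∀ x : ℝ × ℝ × ℝ, HasDerivAt (fun t => φ (t, x.2)) (d1 x) x.1)
    (hd2 : ∀ x : ℝ × ℝ × ℝ, HasDerivAt (fun t => φ (x.1, t, x.2.2)) (d2 x) x.2.1)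
    (hd3 : ∀ x : ℝ × ℝ × ℝ, HasDerivAt (fun t => φ (x.1, x.2.1, t)) (d3 x) x.2.2)
    (L1 L2 L3 Ω Ω1p L1p Q1p S2 S3 S2p S2m S3p S3m : Set (ℝ × ℝ × ℝ))
    (hL1 : L1 = {x : ℝ × ℝ × ℝ | |x.2.1| < 1 / 2 ∧ |x.2.2| < 1 / 2})
    (hL2 : L2 = {x : ℝ × ℝ × ℝ | |x.1| < 1 / 2 ∧ |x.2.2| < 1 / 2})
    (hL3 : L3 = {x : ℝ × ℝ × ℝ | |x.1| < 1 / 2 ∧ |x.2.1| < 1 / 2})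
    (hΩ : Ω = L1 ∪ L2 ∪ L3)
    (hΩ1p : Ω1p = {x ∈ Ω | 0 < x.1})
    (hL1p : L1p = {x ∈ L1 | 1 / 2 < x.1})
    (hQ1p : Q1p = {x : ℝ × ℝ × ℝ | 0 < x.1 ∧ x.1 < 1 / 2 ∧ |x.2.1| < 1 / 2 ∧ |x.2.2| < 1 / 2})
    (hS2 : S2 = {x ∈ L2 | 0 < x.1})
    (hS3 : S3 = {x ∈ L3 | 0 < x.1})
    (hS2p : S2p = {x ∈ S2 | 1 / 2 < x.2.1})
    (hS2m : S2m = {x ∈ S2 | x.2.1 < -(1 / 2)})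
    (hS3p : S3p = {x ∈ S3 | 1 / 2 < x.2.2})
    (hS3m : S3m = {x ∈ S3 | x.2.2 < -(1 / 2)})
    (hintφ : IntegrableOn (fun x => (φ x) ^ 2) Ω1p)
    (hint1 : IntegrableOn (fun x => (d1 x) ^ 2) Ω1p)
    (hint2 : IntegrableOn (fun x => (d2 x) ^ 2) Ω1p)
    (hint3 : IntegrableOn (fun x => (d3 x) ^ 2) Ω1p)
    (ha : 2 * π ^ 2 * ∫ x in L1p, (φ x) ^ 2 ≤
      ∫ x in L1p, ((d1 x) ^ 2 + (d2 x) ^ 2 + (d3 x) ^ 2))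
    (hb : π ^ 2 * ∫ x in Q1p, (φ x) ^ 2 ≤ ∫ x in Q1p, (d1 x) ^ 2)
    (hc : π ^ 2 / 2 * ∫ x in Q1p, (φ x) ^ 2 ≤
      (∫ x in S2, (d2 x) ^ 2) + 5 * π ^ 2 / 2 * ∫ x in S2p ∪ S2m, (φ x) ^ 2)
    (hd : π ^ 2 / 2 * ∫ x in Q1p, (φ x) ^ 2 ≤
      (∫ x in S3, (d3 x) ^ 2) + 5 * π ^ 2 / 2 * ∫ x in S3p ∪ S3m, (φ x) ^ 2)
    (he2p : 5 * π ^ 2 * ∫ x in S2p, (φ x) ^ 2 ≤ ∫ x in S2p, ((d1 x) ^ 2 + (d3 x) ^ 2))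
    (he2m : 5 * π ^ 2 * ∫ x in S2m, (φ x) ^ 2 ≤ ∫ x in S2m, ((d1 x) ^ 2 + (d3 x) ^ 2))
    (he3p : 5 * π ^ 2 * ∫ x in S3p, (φ x) ^ 2 ≤ ∫ x in S3p, ((d1 x) ^ 2 + (d2 x) ^ 2))
    (he3m : 5 * π ^ 2 * ∫ x in S3m, (φ x) ^ 2 ≤ ∫ x in S3m, ((d1 x) ^ 2 + (d2 x) ^ 2)) :
    2 * π ^ 2 * ∫ x in Ω1p, (φ x) ^ 2 ≤
      ∫ x in Ω1p, ((d1 x) ^ 2 + (d2 x) ^ 2 + (d3 x) ^ 2) := by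
  -- measurability of the pieces
  have hm1 : Measurable fun x : ℝ × ℝ × ℝ => x.1 := measurable_fst
  have hm2 : Measurable fun x : ℝ × ℝ × ℝ => x.2.1 := measurable_snd.fst
  have hm3 : Measurable fun x : ℝ × ℝ × ℝ => x.2.2 := measurable_snd.snd
  have mAbs1 : MeasurableSet {x : ℝ × ℝ × ℝ | |x.1| < 1 / 2} :=
    measurableSet_lt hm1.abs measurable_const
  have mAbs2 : MeasurableSet {x : ℝ × ℝ × ℝ | |x.2.1| < 1 / 2} :=
    measurableSet_lt hm2.abs measurable_const
  have mAbs3 : MeasurableSet {x : ℝ × ℝ × ℝ | |x.2.2| < 1 / 2} :=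
    measurableSet_lt hm3.abs measurable_const
  have mPos : MeasurableSet {x : ℝ × ℝ × ℝ | 0 < x.1} :=
    measurableSet_lt measurable_const hm1
  have mGt1 : MeasurableSet {x : ℝ × ℝ × ℝ | 1 / 2 < x.1} :=
    measurableSet_lt measurable_const hm1
  have mLt1 : MeasurableSet {x : ℝ × ℝ × ℝ | x.1 < 1 / 2} :=
    measurableSet_lt hm1 measurable_const
  have mGt2 : MeasurableSet {x : ℝ × ℝ × ℝ | 1 / 2 < x.2.1} :=
    measurableSet_lt measurable_const hm2
  have mLt2 : MeasurableSet {x : ℝ × ℝ × ℝ | x.2.1 < -(1 / 2)} :=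
    measurableSet_lt hm2 measurable_const
  have mGt3 : MeasurableSet {x : ℝ × ℝ × ℝ | 1 / 2 < x.2.2} :=
    measurableSet_lt measurable_const hm3
  have mLt3 : MeasurableSet {x : ℝ × ℝ × ℝ | x.2.2 < -(1 / 2)} :=
    measurableSet_lt hm3 measurable_const
  have mL1p : MeasurableSet L1p := by
    rw [hL1p, hL1]; exact (mAbs2.inter mAbs3).inter mGt1
  have mQ1p : MeasurableSet Q1p := by
    rw [hQ1p]; exact mPos.inter (mLt1.inter (mAbs2.inter mAbs3))
  have mS2 : MeasurableSet S2 := by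
    rw [hS2, hL2]; exact (mAbs1.inter mAbs3).inter mPos
  have mS3 : MeasurableSet S3 := by
    rw [hS3, hL3]; exact (mAbs1.inter mAbs2).inter mPos
  have mS2p : MeasurableSet S2p := by rw [hS2p]; exact mS2.inter mGt2
  have mS2m : MeasurableSet S2m := by rw [hS2m]; exact mS2.inter mLt2
  have mS3p : MeasurableSet S3p := by rw [hS3p]; exact mS3.inter mGt3
  have mS3m : MeasurableSet S3m := by rw [hS3m]; exact mS3.inter mLt3
  -- subset relations
  have sL1p : L1p ⊆ Ω1p := by
    rw [hL1p, hΩ1p, hΩ]; intro x hx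
    exact ⟨Or.inl (Or.inl hx.1), by have := hx.2; linarith⟩
  have sQS2 : Q1p ⊆ S2 := by
    rw [hQ1p, hS2, hL2]; intro x hx
    obtain ⟨h0, h1, h2, h3⟩ := hx
    exact ⟨⟨abs_lt.mpr ⟨by linarith, h1⟩, h3⟩, h0⟩
  have sQS3 : Q1p ⊆ S3 := by
    rw [hQ1p, hS3, hL3]; intro x hx
    obtain ⟨h0, h1, h2, h3⟩ := hx
    exact ⟨⟨abs_lt.mpr ⟨by linarith, h1⟩, h2⟩, h0⟩
  have sS2 : S2 ⊆ Ω1p := by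
    rw [hS2, hΩ1p, hΩ]; intro x hx; exact ⟨Or.inl (Or.inr hx.1), hx.2⟩
  have sS3 : S3 ⊆ Ω1p := by
    rw [hS3, hΩ1p, hΩ]; intro x hx; exact ⟨Or.inr hx.1, hx.2⟩
  have sQ : Q1p ⊆ Ω1p := sQS2.trans sS2
  have s2pS2 : S2p ⊆ S2 := by rw [hS2p]; exact sep_subset _ _
  have s2mS2 : S2m ⊆ S2 := by rw [hS2m]; exact sep_subset _ _
  have s3pS3 : S3p ⊆ S3 := by rw [hS3p]; exact sep_subset _ _
  have s3mS3 : S3m ⊆ S3 := by rw [hS3m]; exact sep_subset _ _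
  have s2p : S2p ⊆ Ω1p := s2pS2.trans sS2
  have s2m : S2m ⊆ Ω1p := s2mS2.trans sS2
  have s3p : S3p ⊆ Ω1p := s3pS3.trans sS3
  have s3m : S3m ⊆ Ω1p := s3mS3.trans sS3
  -- coordinate bounds
  have bL1p : ∀ x ∈ L1p, 1 / 2 < x.1 := by
    intro x hx; rw [hL1p] at hx; exact hx.2
  have bL1p2 : ∀ x ∈ L1p, |x.2.1| < 1 / 2 ∧ |x.2.2| < 1 / 2 := by
    intro x hx; rw [hL1p, hL1] at hx; exact hx.1
  have bQ : ∀ x ∈ Q1p, 0 < x.1 ∧ x.1 < 1 / 2 ∧ |x.2.1| < 1 / 2 ∧ |x.2.2| < 1 / 2 := by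
    intro x hx; rw [hQ1p] at hx; exact hx
  have bS2 : ∀ x ∈ S2, (|x.1| < 1 / 2 ∧ |x.2.2| < 1 / 2) ∧ 0 < x.1 := by
    intro x hx; rw [hS2, hL2] at hx; exact hx
  have bS3 : ∀ x ∈ S3, (|x.1| < 1 / 2 ∧ |x.2.1| < 1 / 2) ∧ 0 < x.1 := by
    intro x hx; rw [hS3, hL3] at hx; exact hx
  have bS2p : ∀ x ∈ S2p, 1 / 2 < x.2.1 := by intro x hx; rw [hS2p] at hx; exact hx.2
  have bS2m : ∀ x ∈ S2m, x.2.1 < -(1 / 2) := by intro x hx; rw [hS2m] at hx; exact hx.2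
  have bS3p : ∀ x ∈ S3p, 1 / 2 < x.2.2 := by intro x hx; rw [hS3p] at hx; exact hx.2
  have bS3m : ∀ x ∈ S3m, x.2.2 < -(1 / 2) := by intro x hx; rw [hS3m] at hx; exact hx.2
  -- pairwise disjointness
  have dLQ : Disjoint L1p Q1p := Set.disjoint_left.mpr fun x hx hx' => by
    have := bL1p x hx; have := (bQ x hx').2.1; linarith
  have dL2p : Disjoint L1p S2p := Set.disjoint_left.mpr fun x hx hx' => by
    have := bL1p x hx; have := (abs_lt.mp (bS2 x (s2pS2 hx')).1.1).2; linarith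
  have dL2m : Disjoint L1p S2m := Set.disjoint_left.mpr fun x hx hx' => by
    have := bL1p x hx; have := (abs_lt.mp (bS2 x (s2mS2 hx')).1.1).2; linarith
  have dL3p : Disjoint L1p S3p := Set.disjoint_left.mpr fun x hx hx' => by
    have := bL1p x hx; have := (abs_lt.mp (bS3 x (s3pS3 hx')).1.1).2; linarith
  have dL3m : Disjoint L1p S3m := Set.disjoint_left.mpr fun x hx hx' => by
    have := bL1p x hx; have := (abs_lt.mp (bS3 x (s3mS3 hx')).1.1).2; linarith
  have dQ2p : Disjoint Q1p S2p := Set.disjoint_left.mpr fun x hx hx' => by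
    have := (abs_lt.mp (bQ x hx).2.2.1).2; have := bS2p x hx'; linarith
  have dQ2m : Disjoint Q1p S2m := Set.disjoint_left.mpr fun x hx hx' => by
    have := (abs_lt.mp (bQ x hx).2.2.1).1; have := bS2m x hx'; linarith
  have dQ3p : Disjoint Q1p S3p := Set.disjoint_left.mpr fun x hx hx' => by
    have := (abs_lt.mp (bQ x hx).2.2.2).2; have := bS3p x hx'; linarith
  have dQ3m : Disjoint Q1p S3m := Set.disjoint_left.mpr fun x hx hx' => by
    have := (abs_lt.mp (bQ x hx).2.2.2).1; have := bS3m x hx'; linarith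
  have d2p2m : Disjoint S2p S2m := Set.disjoint_left.mpr fun x hx hx' => by
    have := bS2p x hx; have := bS2m x hx'; linarith
  have d2p3p : Disjoint S2p S3p := Set.disjoint_left.mpr fun x hx hx' => by
    have := bS2p x hx; have := (abs_lt.mp (bS3 x (s3pS3 hx')).1.2).2; linarith
  have d2p3m : Disjoint S2p S3m := Set.disjoint_left.mpr fun x hx hx' => by
    have := bS2p x hx; have := (abs_lt.mp (bS3 x (s3mS3 hx')).1.2).2; linarith
  have d2m3p : Disjoint S2m S3p := Set.disjoint_left.mpr fun x hx hx' => by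
    have := bS2m x hx; have := (abs_lt.mp (bS3 x (s3pS3 hx')).1.2).1; linarith
  have d2m3m : Disjoint S2m S3m := Set.disjoint_left.mpr fun x hx hx' => by
    have := bS2m x hx; have := (abs_lt.mp (bS3 x (s3mS3 hx')).1.2).1; linarith
  have d3p3m : Disjoint S3p S3m := Set.disjoint_left.mpr fun x hx hx' => by
    have := bS3p x hx; have := bS3m x hx'; linarith
  -- Ω1p is a.e. equal to the union of the six pieces
  have hUsub : L1p ∪ Q1p ∪ S2p ∪ S2m ∪ S3p ∪ S3m ⊆ Ω1p :=
    union_subset (union_subset (union_subset (union_subset (union_subset sL1p sQ) s2p) s2m)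
      s3p) s3m
  have hdiff : Ω1p \ (L1p ∪ Q1p ∪ S2p ∪ S2m ∪ S3p ∪ S3m) ⊆
      {x : ℝ × ℝ × ℝ | x.1 = 1 / 2} ∪ {x : ℝ × ℝ × ℝ | x.2.1 = 1 / 2} ∪
      {x : ℝ × ℝ × ℝ | x.2.1 = -(1 / 2)} ∪ {x : ℝ × ℝ × ℝ | x.2.2 = 1 / 2} ∪
      {x : ℝ × ℝ × ℝ | x.2.2 = -(1 / 2)} := by
    intro x hx
    obtain ⟨hxΩ, hxU⟩ := hx
    simp only [Set.mem_union, not_or] at hxU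
    obtain ⟨⟨⟨⟨⟨n1, n2⟩, n3⟩, n4⟩, n5⟩, n6⟩ := hxU
    rw [hΩ1p, Set.mem_sep_iff, hΩ] at hxΩ
    obtain ⟨hmem, hpos⟩ := hxΩ
    simp only [Set.mem_union, Set.mem_setOf_eq]
    rcases hmem with (h | h) | h
    · rw [hL1, Set.mem_setOf_eq] at h
      rcases lt_trichotomy x.1 (1 / 2) with hlt | heq | hgt
      · exact absurd (show x ∈ Q1p by rw [hQ1p]; exact ⟨hpos, hlt, h.1, h.2⟩) n2
      · exact Or.inl (Or.inl (Or.inl (Or.inl heq)))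
      · exact absurd (show x ∈ L1p by
          rw [hL1p]; exact ⟨by rw [hL1]; exact h, hgt⟩) n1
    · rw [hL2, Set.mem_setOf_eq] at h
      have hxS2 : x ∈ S2 := by rw [hS2]; exact ⟨by rw [hL2]; exact h, hpos⟩
      rcases lt_trichotomy x.2.1 (1 / 2) with hlt | heq | hgt
      · rcases lt_trichotomy x.2.1 (-(1 / 2)) with hlt' | heq' | hgt'
        · exact absurd (show x ∈ S2m by rw [hS2m]; exact ⟨hxS2, hlt'⟩) n4
        · exact Or.inl (Or.inl (Or.inr heq'))
        · exact absurd (show x ∈ Q1p by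
            rw [hQ1p]
            exact ⟨hpos, (abs_lt.mp h.1).2, abs_lt.mpr ⟨hgt', hlt⟩, h.2⟩) n2
      · exact Or.inl (Or.inl (Or.inl (Or.inr heq)))
      · exact absurd (show x ∈ S2p by rw [hS2p]; exact ⟨hxS2, hgt⟩) n3
    · rw [hL3, Set.mem_setOf_eq] at h
      have hxS3 : x ∈ S3 := by rw [hS3]; exact ⟨by rw [hL3]; exact h, hpos⟩
      rcases lt_trichotomy x.2.2 (1 / 2) with hlt | heq | hgt
      · rcases lt_trichotomy x.2.2 (-(1 / 2)) with hlt' | heq' | hgt'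
        · exact absurd (show x ∈ S3m by rw [hS3m]; exact ⟨hxS3, hlt'⟩) n6
        · exact Or.inr heq'
        · exact absurd (show x ∈ Q1p by
            rw [hQ1p]
            exact ⟨hpos, (abs_lt.mp h.1).2, h.2, abs_lt.mpr ⟨hgt', hlt⟩⟩) n2
      · exact Or.inl (Or.inr heq)
      · exact absurd (show x ∈ S3p by rw [hS3p]; exact ⟨hxS3, hgt⟩) n5
  have hae : Ω1p =ᵐ[volume] ((L1p ∪ Q1p ∪ S2p ∪ S2m ∪ S3p ∪ S3m : Set (ℝ × ℝ × ℝ))) := by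
    rw [MeasureTheory.ae_eq_set]
    constructor
    · refine measure_mono_null hdiff ?_
      refine measure_union_null (measure_union_null (measure_union_null
        (measure_union_null ?_ ?_) ?_) ?_) ?_
      exacts [plane1_null _, plane2_null _, plane2_null _, plane3_null _, plane3_null _]
    · rw [Set.diff_eq_empty.mpr hUsub]; simp
  -- S2 and S3 are a.e. equal to unions of pieces
  have haeS2 : S2 =ᵐ[volume] ((Q1p ∪ S2p ∪ S2m : Set (ℝ × ℝ × ℝ))) := by
    rw [MeasureTheory.ae_eq_set]
    constructor
    · refine measure_mono_null (?_ : _ ⊆ {x : ℝ × ℝ × ℝ | x.2.1 = 1 / 2} ∪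
        {x : ℝ × ℝ × ℝ | x.2.1 = -(1 / 2)}) ?_
      · intro x hx
        obtain ⟨hxS2, hxU⟩ := hx
        simp only [Set.mem_union, not_or] at hxU
        obtain ⟨⟨n2, n3⟩, n4⟩ := hxU
        obtain ⟨⟨h1, h3⟩, hpos⟩ := bS2 x hxS2
        simp only [Set.mem_union, Set.mem_setOf_eq]
        rcases lt_trichotomy x.2.1 (1 / 2) with hlt | heq | hgt
        · rcases lt_trichotomy x.2.1 (-(1 / 2)) with hlt' | heq' | hgt'
          · exact absurd (show x ∈ S2m by rw [hS2m]; exact ⟨hxS2, hlt'⟩) n4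
          · exact Or.inr heq'
          · exact absurd (show x ∈ Q1p by
              rw [hQ1p]
              exact ⟨hpos, (abs_lt.mp h1).2, abs_lt.mpr ⟨hgt', hlt⟩, h3⟩) n2
        · exact Or.inl heq
        · exact absurd (show x ∈ S2p by rw [hS2p]; exact ⟨hxS2, hgt⟩) n3
      · exact measure_union_null (plane2_null _) (plane2_null _)
    · rw [Set.diff_eq_empty.mpr
        (union_subset (union_subset sQS2 s2pS2) s2mS2)]; simp
  have haeS3 : S3 =ᵐ[volume] ((Q1p ∪ S3p ∪ S3m : Set (ℝ × ℝ × ℝ))) := by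
    rw [MeasureTheory.ae_eq_set]
    constructor
    · refine measure_mono_null (?_ : _ ⊆ {x : ℝ × ℝ × ℝ | x.2.2 = 1 / 2} ∪
        {x : ℝ × ℝ × ℝ | x.2.2 = -(1 / 2)}) ?_
      · intro x hx
        obtain ⟨hxS3, hxU⟩ := hx
        simp only [Set.mem_union, not_or] at hxU
        obtain ⟨⟨n2, n3⟩, n4⟩ := hxU
        obtain ⟨⟨h1, h2⟩, hpos⟩ := bS3 x hxS3
        simp only [Set.mem_union, Set.mem_setOf_eq]
        rcases lt_trichotomy x.2.2 (1 / 2) with hlt | heq | hgt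
        · rcases lt_trichotomy x.2.2 (-(1 / 2)) with hlt' | heq' | hgt'
          · exact absurd (show x ∈ S3m by rw [hS3m]; exact ⟨hxS3, hlt'⟩) n4
          · exact Or.inr heq'
          · exact absurd (show x ∈ Q1p by
              rw [hQ1p]
              exact ⟨hpos, (abs_lt.mp h1).2, h2, abs_lt.mpr ⟨hgt', hlt⟩⟩) n2
        · exact Or.inl heq
        · exact absurd (show x ∈ S3p by rw [hS3p]; exact ⟨hxS3, hgt⟩) n3
      · exact measure_union_null (plane3_null _) (plane3_null _)
    · rw [Set.diff_eq_empty.mpr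
        (union_subset (union_subset sQS3 s3pS3) s3mS3)]; simp
  -- splitting lemma over Ω1p
  have splitΩ : ∀ f : ℝ × ℝ × ℝ → ℝ, IntegrableOn f Ω1p →
      ∫ x in Ω1p, f x = (∫ x in L1p, f x) + (∫ x in Q1p, f x) + (∫ x in S2p, f x) +
        (∫ x in S2m, f x) + (∫ x in S3p, f x) + (∫ x in S3m, f x) := by
    intro f hf
    rw [setIntegral_congr_set hae]
    rw [setIntegral_union (by
        exact Set.disjoint_union_left.mpr ⟨Set.disjoint_union_left.mpr
          ⟨Set.disjoint_union_left.mpr ⟨Set.disjoint_union_left.mpr ⟨dL3m, dQ3m⟩,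
            d2p3m⟩, d2m3m⟩, d3p3m.symm.symm⟩) mS3m
      (hf.mono_set (union_subset (union_subset (union_subset (union_subset sL1p sQ) s2p)
        s2m) s3p)) (hf.mono_set s3m)]
    rw [setIntegral_union (Set.disjoint_union_left.mpr ⟨Set.disjoint_union_left.mpr
        ⟨Set.disjoint_union_left.mpr ⟨dL3p, dQ3p⟩, d2p3p⟩, d2m3p⟩) mS3p
      (hf.mono_set (union_subset (union_subset (union_subset sL1p sQ) s2p) s2m))
      (hf.mono_set s3p)]
    rw [setIntegral_union (Set.disjoint_union_left.mpr ⟨Set.disjoint_union_left.mpr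
        ⟨dL2m, dQ2m⟩, d2p2m⟩) mS2m
      (hf.mono_set (union_subset (union_subset sL1p sQ) s2p)) (hf.mono_set s2m)]
    rw [setIntegral_union (Set.disjoint_union_left.mpr ⟨dL2p, dQ2p⟩) mS2p
      (hf.mono_set (union_subset sL1p sQ)) (hf.mono_set s2p)]
    rw [setIntegral_union dLQ mQ1p (hf.mono_set sL1p) (hf.mono_set sQ)]
  -- splitting lemmas over S2, S3
  have splitS2 : ∀ f : ℝ × ℝ × ℝ → ℝ, IntegrableOn f Ω1p →
      ∫ x in S2, f x = (∫ x in Q1p, f x) + (∫ x in S2p, f x) + (∫ x in S2m, f x) := by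
    intro f hf
    rw [setIntegral_congr_set haeS2]
    rw [setIntegral_union (Set.disjoint_union_left.mpr ⟨dQ2m, d2p2m⟩) mS2m
      (hf.mono_set (union_subset sQ s2p)) (hf.mono_set s2m)]
    rw [setIntegral_union dQ2p mS2p (hf.mono_set sQ) (hf.mono_set s2p)]
  have splitS3 : ∀ f : ℝ × ℝ × ℝ → ℝ, IntegrableOn f Ω1p →
      ∫ x in S3, f x = (∫ x in Q1p, f x) + (∫ x in S3p, f x) + (∫ x in S3m, f x) := by
    intro f hf
    rw [setIntegral_congr_set haeS3]
    rw [setIntegral_union (Set.disjoint_union_left.mpr ⟨dQ3m, d3p3m⟩) mS3m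
      (hf.mono_set (union_subset sQ s3p)) (hf.mono_set s3m)]
    rw [setIntegral_union dQ3p mS3p (hf.mono_set sQ) (hf.mono_set s3p)]
  -- expand sums of squares in the integrals
  have eΩ : ∫ x in Ω1p, ((d1 x) ^ 2 + (d2 x) ^ 2 + (d3 x) ^ 2) =
      (∫ x in Ω1p, (d1 x) ^ 2) + (∫ x in Ω1p, (d2 x) ^ 2) + (∫ x in Ω1p, (d3 x) ^ 2) := by
    have h12 : IntegrableOn (fun x => (d1 x) ^ 2 + (d2 x) ^ 2) Ω1p := hint1.add hint2
    rw [integral_add h12 hint3, integral_add hint1 hint2]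
  have eL : ∫ x in L1p, ((d1 x) ^ 2 + (d2 x) ^ 2 + (d3 x) ^ 2) =
      (∫ x in L1p, (d1 x) ^ 2) + (∫ x in L1p, (d2 x) ^ 2) + (∫ x in L1p, (d3 x) ^ 2) := by
    have h12 : IntegrableOn (fun x => (d1 x) ^ 2 + (d2 x) ^ 2) L1p :=
      (hint1.mono_set sL1p).add (hint2.mono_set sL1p)
    rw [integral_add h12 (hint3.mono_set sL1p),
      integral_add (hint1.mono_set sL1p) (hint2.mono_set sL1p)]
  have e2p : ∫ x in S2p, ((d1 x) ^ 2 + (d3 x) ^ 2) =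
      (∫ x in S2p, (d1 x) ^ 2) + (∫ x in S2p, (d3 x) ^ 2) :=
    integral_add (hint1.mono_set s2p) (hint3.mono_set s2p)
  have e2m : ∫ x in S2m, ((d1 x) ^ 2 + (d3 x) ^ 2) =
      (∫ x in S2m, (d1 x) ^ 2) + (∫ x in S2m, (d3 x) ^ 2) :=
    integral_add (hint1.mono_set s2m) (hint3.mono_set s2m)
  have e3p : ∫ x in S3p, ((d1 x) ^ 2 + (d2 x) ^ 2) =
      (∫ x in S3p, (d1 x) ^ 2) + (∫ x in S3p, (d2 x) ^ 2) :=
    integral_add (hint1.mono_set s3p) (hint2.mono_set s3p)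
  have e3m : ∫ x in S3m, ((d1 x) ^ 2 + (d2 x) ^ 2) =
      (∫ x in S3m, (d1 x) ^ 2) + (∫ x in S3m, (d2 x) ^ 2) :=
    integral_add (hint1.mono_set s3m) (hint2.mono_set s3m)
  -- split of φ² over S2p ∪ S2m and S3p ∪ S3m
  have eφ2 : ∫ x in S2p ∪ S2m, (φ x) ^ 2 =
      (∫ x in S2p, (φ x) ^ 2) + (∫ x in S2m, (φ x) ^ 2) :=
    setIntegral_union d2p2m mS2m (hintφ.mono_set s2p) (hintφ.mono_set s2m)
  have eφ3 : ∫ x in S3p ∪ S3m, (φ x) ^ 2 =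
      (∫ x in S3p, (φ x) ^ 2) + (∫ x in S3m, (φ x) ^ 2) :=
    setIntegral_union d3p3m mS3m (hintφ.mono_set s3p) (hintφ.mono_set s3m)
  -- nonnegativity of integrals of squares
  have nA2p : 0 ≤ ∫ x in S2p, (d1 x) ^ 2 := setIntegral_nonneg mS2p fun x _ => sq_nonneg _
  have nC2p : 0 ≤ ∫ x in S2p, (d3 x) ^ 2 := setIntegral_nonneg mS2p fun x _ => sq_nonneg _
  have nA2m : 0 ≤ ∫ x in S2m, (d1 x) ^ 2 := setIntegral_nonneg mS2m fun x _ => sq_nonneg _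
  have nC2m : 0 ≤ ∫ x in S2m, (d3 x) ^ 2 := setIntegral_nonneg mS2m fun x _ => sq_nonneg _
  have nA3p : 0 ≤ ∫ x in S3p, (d1 x) ^ 2 := setIntegral_nonneg mS3p fun x _ => sq_nonneg _
  have nB3p : 0 ≤ ∫ x in S3p, (d2 x) ^ 2 := setIntegral_nonneg mS3p fun x _ => sq_nonneg _
  have nA3m : 0 ≤ ∫ x in S3m, (d1 x) ^ 2 := setIntegral_nonneg mS3m fun x _ => sq_nonneg _
  have nB3m : 0 ≤ ∫ x in S3m, (d2 x) ^ 2 := setIntegral_nonneg mS3m fun x _ => sq_nonneg _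
  -- rewrite all hypotheses and the goal
  rw [eL] at ha
  rw [splitS2 _ hint2, eφ2] at hc
  rw [splitS3 _ hint3, eφ3] at hd
  rw [e2p] at he2p
  rw [e2m] at he2m
  rw [e3p] at he3p
  rw [e3m] at he3m
  rw [splitΩ _ hintφ, eΩ, splitΩ _ hint1, splitΩ _ hint2, splitΩ _ hint3]
  nlinarith [ha, hb, hc, hd, he2p, he2m, he3p, he3m, nA2p, nC2p, nA2m, nC2m, nA3p, nB3p,
    nA3m, nB3m]
end
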